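/- Let A ∈ ℝ^{n×n} be strictly row diagonally dominant. Then A has an LU factorization A = LU where L is unit lower triangular and U is upper triangular and strictly row diagonally dominant. -/

import Mathlib

open Finset

private lemma sum_erase_succ' {n : ℕ} (f : Fin (n+1) → ℝ) (i : Fin n) :
    ∑ j ∈ univ.erase i.succ, f j = f 0 + ∑ j ∈ univ.erase i, f j.succ := by
  rw [Finset.sum_erase_eq_sub (mem_univ _), Finset.sum_erase_eq_sub (mem_univ _),
    Fin.sum_univ_succ]
  ring

private lemma sum_erase_zero' {n : ℕ} (f : Fin (n+1) → ℝ) :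
    ∑ j ∈ univ.erase 0, f j = ∑ j : Fin n, f j.succ := by
  rw [Finset.sum_erase_eq_sub (mem_univ _), Fin.sum_univ_succ]
  ring

/-- A strictly row diagonally dominant matrix admits an LU factorization
`A = L * U` with `L` unit lower triangular and `U` upper triangular and
strictly row diagonally dominant. -/
theorem lu_of_strictDD {n : ℕ} (A : Matrix (Fin n) (Fin n) ℝ)
    (hdd : ∀ i : Fin n, ∑ j ∈ Finset.univ.erase i, |A i j| < |A i i|) :
    ∃ L U : Matrix (Fin n) (Fin n) ℝ,
      (∀ i j : Fin n, i < j → L i j = 0) ∧ (∀ i : Fin n, L i i = 1) ∧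
      (∀ i j : Fin n, j < i → U i j = 0) ∧
      (∀ i : Fin n, ∑ j ∈ Finset.univ.erase i, |U i j| < |U i i|) ∧
      A = L * U := by
  induction n with
  | zero =>
    exact ⟨1, 1, fun i => i.elim0, fun i => i.elim0, fun i => i.elim0, fun i => i.elim0,
      by ext i j; exact i.elim0⟩
  | succ n ih =>
    have hpos : 0 < |A 0 0| :=
      lt_of_le_of_lt (Finset.sum_nonneg fun j _ => abs_nonneg _) (hdd 0)
    have h00 : A 0 0 ≠ 0 := abs_pos.mp hpos
    set m : Fin n → ℝ := fun i => A i.succ 0 / A 0 0 with hm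
    set B : Matrix (Fin n) (Fin n) ℝ :=
      fun i j => A i.succ j.succ - m i * A 0 j.succ with hBdef
    have h0 : ∑ j : Fin n, |A 0 j.succ| < |A 0 0| := by
      have := hdd 0
      rwa [sum_erase_zero' (fun j => |A 0 j|)] at this
    have hBdd : ∀ i, ∑ j ∈ univ.erase i, |B i j| < |B i i| := by
      intro i
      have hi := hdd i.succ
      rw [sum_erase_succ' (fun j => |A i.succ j|) i] at hi
      have hma : |m i| * |A 0 0| = |A i.succ 0| := by
        rw [hm]
        simp only []
        rw [abs_div, div_mul_cancel₀ _ (abs_ne_zero.mpr h00)]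
      have hmul : |m i| * (∑ j : Fin n, |A 0 j.succ|) ≤ |m i| * |A 0 0| :=
        mul_le_mul_of_nonneg_left h0.le (abs_nonneg _)
      calc ∑ j ∈ univ.erase i, |B i j|
          ≤ ∑ j ∈ univ.erase i, (|A i.succ j.succ| + |m i| * |A 0 j.succ|) := by
            apply Finset.sum_le_sum
            intro j _
            have h1 : |A i.succ j.succ - m i * A 0 j.succ|
                ≤ |A i.succ j.succ| + |m i * A 0 j.succ| := abs_sub _ _
            rw [abs_mul] at h1
            simpa [hBdef] using h1
        _ = (∑ j ∈ univ.erase i, |A i.succ j.succ|)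
              + |m i| * ∑ j ∈ univ.erase i, |A 0 j.succ| := by
            rw [Finset.sum_add_distrib, Finset.mul_sum]
        _ = (∑ j ∈ univ.erase i, |A i.succ j.succ|)
              + |m i| * (∑ j : Fin n, |A 0 j.succ|) - |m i| * |A 0 i.succ| := by
            have hseq : ∑ j ∈ univ.erase i, |A 0 j.succ|
                = (∑ j : Fin n, |A 0 j.succ|) - |A 0 i.succ| :=
              Finset.sum_erase_eq_sub (f := fun j => |A 0 j.succ|) (mem_univ i)
            rw [hseq, mul_sub]
            ring
        _ < |A i.succ i.succ| - |m i| * |A 0 i.succ| := by linarith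
        _ ≤ |B i i| := by
            have h2 := abs_sub_abs_le_abs_sub (A i.succ i.succ) (m i * A 0 i.succ)
            rw [abs_mul] at h2
            simpa [hBdef] using h2
    obtain ⟨L', U', hL'lt, hL'diag, hU'lt, hU'dd, hLU⟩ := ih B hBdd
    refine ⟨
      fun i j => Fin.cases (if j = 0 then 1 else 0)
        (fun i' => Fin.cases (m i') (fun j' => L' i' j') j) i,
      fun i j => Fin.cases (A 0 j)
        (fun i' => Fin.cases 0 (fun j' => U' i' j') j) i,
      ?_, ?_, ?_, ?_, ?_⟩
    · intro i j hij
      obtain rfl | ⟨i', rfl⟩ := Fin.eq_zero_or_eq_succ i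
      · have hj : j ≠ 0 := Fin.pos_iff_ne_zero.mp hij
        simp [hj]
      · obtain rfl | ⟨j', rfl⟩ := Fin.eq_zero_or_eq_succ j
        · exact absurd hij (by simp)
        · simp only [Fin.cases_succ]
          exact hL'lt i' j' (Fin.succ_lt_succ_iff.mp hij)
    · intro i
      obtain rfl | ⟨i', rfl⟩ := Fin.eq_zero_or_eq_succ i
      · simp
      · simp [hL'diag i']
    · intro i j hij
      obtain rfl | ⟨i', rfl⟩ := Fin.eq_zero_or_eq_succ i
      · exact absurd hij (by simp)
      · obtain rfl | ⟨j', rfl⟩ := Fin.eq_zero_or_eq_succ j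
        · simp
        · simp only [Fin.cases_succ]
          exact hU'lt i' j' (Fin.succ_lt_succ_iff.mp hij)
    · intro i
      obtain rfl | ⟨i', rfl⟩ := Fin.eq_zero_or_eq_succ i
      · simpa [sum_erase_zero' (fun j => |A 0 j|)] using hdd 0
      · rw [sum_erase_succ']
        simpa using hU'dd i'
    · ext i j
      erw [Matrix.mul_apply]
      obtain rfl | ⟨i', rfl⟩ := Fin.eq_zero_or_eq_succ i
      · rw [Fin.sum_univ_succ]
        simp [Fin.succ_ne_zero]
      · rw [Fin.sum_univ_succ]
        obtain rfl | ⟨j', rfl⟩ := Fin.eq_zero_or_eq_succ j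
        · simp only [Fin.cases_succ, Fin.cases_zero]
          rw [hm]
          simp
          field_simp
        · have hs : B i' j' = ∑ k : Fin n, L' i' k * U' k j' := by
            rw [hLU, Matrix.mul_apply]
          simp only [Fin.cases_succ, Fin.cases_zero, ← hs, hBdef]
          ring
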